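/- (Monotonicity of Y in the ambiguity parameter, high risk aversion.) Let T > 0, γ > 1, β > 0, and suppose for each parameter η ≥ 0 the function Y_η : [0,T] → ℝ is the C¹ solution to −Y_η′(t) = g(Y_η(t)) + ( A(t) + ((1−γ)/(2γ)) Σⱼ (θⱼ⁺)²/(γ + ηⱼ) ) Y_η(t), Y_η(T) = β^{1/γ}, with A continuous, g continuously differentiable, Y_η(t) > 0, and the ηⱼ fixed except for ηᵢ = η. Assume Y depends smoothly on η. Then ∂Y_η(t)/∂η ≥ 0 for all t: the solution Y is nondecreasing in each ambiguity-aversion parameter ηᵢ when γ > 1 (and nonincreasing when 0 < γ < 1). -/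

import Mathlib

open Set Filter Topology Real

private lemma aux_nonneg {T M : ℝ} {φ d : ℝ → ℝ}
    (hφ : ∀ s ∈ Set.Icc (0:ℝ) T, HasDerivAt φ (d s) s)
    (hd : ∀ s ∈ Set.Icc (0:ℝ) T, -(M * |φ s|) ≤ d s)
    (h0 : φ 0 = 0) : ∀ s ∈ Set.Icc (0:ℝ) T, 0 ≤ φ s := by
  set f : ℝ → ℝ := fun s => max (-(φ s)) 0 with hfdef
  have hcont : ContinuousOn f (Icc 0 T) := fun s hs =>
    (((hφ s hs).continuousAt.neg).continuousWithinAt).max continuousWithinAt_const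
  have key : ∀ s ∈ Icc (0:ℝ) T, f s ≤ gronwallBound 0 M 0 (s - 0) := by
    apply le_gronwallBound_of_liminf_deriv_right_le (f' := fun s => M * f s) hcont
    · intro x hx r hr
      have hx' : x ∈ Icc (0:ℝ) T := Ico_subset_Icc_self hx
      have hder := hφ x hx'
      have hslope : Tendsto (fun z => (z - x)⁻¹ * (φ z - φ x)) (𝓝[>] x) (𝓝 (d x)) := by
        have h1 := hasDerivAt_iff_tendsto_slope.mp hder
        have h2 := h1.mono_left (nhdsWithin_mono x (fun z hz => ne_of_gt hz))
        refine h2.congr (fun z => ?_)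
        simp [slope, div_eq_inv_mul, vsub_eq_sub]
      apply Filter.Eventually.frequently
      rcases lt_trichotomy (φ x) 0 with hlt | heq | hgt
      · -- φ x < 0 : f = -φ locally
        have hfx : f x = -(φ x) := max_eq_left (by linarith)
        have habs : |φ x| = -(φ x) := abs_of_neg hlt
        have hrd : -(d x) < r := by
          have h3 := hd x hx'
          rw [habs] at h3
          have h4 : -(d x) ≤ M * f x := by rw [hfx]; linarith
          linarith
        have hev : ∀ᶠ z in 𝓝[>] x, φ z < 0 := by
          have : ∀ᶠ z in 𝓝 x, φ z < 0 :=
            hder.continuousAt.eventually_lt continuousAt_const hlt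
          exact this.filter_mono nhdsWithin_le_nhds
        have heqq : (fun z => (z - x)⁻¹ * (f z - f x)) =ᶠ[𝓝[>] x]
            (fun z => -((z - x)⁻¹ * (φ z - φ x))) := by
          filter_upwards [hev] with z hz
          have hfz : f z = -(φ z) := max_eq_left (by linarith)
          rw [hfz, hfx]; ring
        have htend : Tendsto (fun z => (z - x)⁻¹ * (f z - f x)) (𝓝[>] x) (𝓝 (-(d x))) :=
          (hslope.neg).congr' heqq.symm
        exact htend.eventually_lt_const hrd
      · -- φ x = 0
        have hfx : f x = 0 := by simp [hfdef, heq]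
        have hr0 : 0 < r := by rw [hfx, mul_zero] at hr; exact hr
        have htend : Tendsto (fun z => max (-((z - x)⁻¹ * (φ z - φ x))) 0) (𝓝[>] x)
            (𝓝 (max (-(d x)) 0)) := (hslope.neg).max tendsto_const_nhds
        have hdx : 0 ≤ d x := by have := hd x hx'; rw [heq] at this; simpa using this
        have hmax : max (-(d x)) 0 = 0 := max_eq_right (by linarith)
        rw [hmax] at htend
        have hev := htend.eventually_lt_const hr0
        refine hev.mp ?_
        filter_upwards [self_mem_nhdsWithin] with z hz h
        have hzx : (0:ℝ) < z - x := sub_pos.mpr hz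
        have hrw : (z - x)⁻¹ * (f z - f x) = max (-((z - x)⁻¹ * (φ z - φ x))) 0 := by
          rw [hfx, sub_zero, heq, sub_zero, hfdef]
          simp only []
          rw [mul_max_of_nonneg _ _ (le_of_lt (inv_pos.mpr hzx)), mul_zero, mul_neg]
        rw [hrw]; exact h
      · -- φ x > 0 : locally f = 0
        have hfx : f x = 0 := max_eq_right (by linarith)
        have hr0 : 0 < r := by rw [hfx, mul_zero] at hr; exact hr
        have hev : ∀ᶠ z in 𝓝[>] x, 0 < φ z := by
          have : ∀ᶠ z in 𝓝 x, 0 < φ z :=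
            (continuousAt_const).eventually_lt hder.continuousAt hgt
          exact this.filter_mono nhdsWithin_le_nhds
        refine hev.mono (fun z hz => ?_)
        have hfz : f z = 0 := max_eq_right (by linarith)
        rw [hfz, hfx]; simpa using hr0
    · simp [hfdef, h0]
    · intro x _; simp
  intro s hs
  have h1 := key s hs
  rw [gronwallBound_ε0_δ0] at h1
  have h2 : max (-(φ s)) 0 ≤ 0 := h1
  have h3 := le_max_left (-(φ s)) 0
  linarith [h3.trans h2]

private lemma comp_le {T : ℝ} {g u v cu cv : ℝ → ℝ} {L C : ℝ}
    (hu : ∀ t ∈ Set.Icc (0:ℝ) T, HasDerivAt u (-(g (u t) + cu t * u t)) t)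
    (hv : ∀ t ∈ Set.Icc (0:ℝ) T, HasDerivAt v (-(g (v t) + cv t * v t)) t)
    (hc : ∀ t ∈ Set.Icc (0:ℝ) T, cu t ≤ cv t)
    (hvpos : ∀ t ∈ Set.Icc (0:ℝ) T, 0 ≤ v t)
    (hLip : ∀ t ∈ Set.Icc (0:ℝ) T, |g (v t) - g (u t)| ≤ L * |v t - u t|)
    (hCb : ∀ t ∈ Set.Icc (0:ℝ) T, |cu t| ≤ C)
    (hend : u T = v T) (hT : 0 ≤ T) :
    ∀ t ∈ Set.Icc (0:ℝ) T, u t ≤ v t := by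
  have mem : ∀ s ∈ Icc (0:ℝ) T, T - s ∈ Icc (0:ℝ) T := by
    intro s hs; exact ⟨by linarith [hs.2], by linarith [hs.1]⟩
  set φ : ℝ → ℝ := fun s => v (T - s) - u (T - s) with hφdef
  set d : ℝ → ℝ := fun s =>
    (g (v (T - s)) + cv (T - s) * v (T - s)) - (g (u (T - s)) + cu (T - s) * u (T - s)) with hddef
  have hinner : ∀ s : ℝ, HasDerivAt (fun z => T - z) (-1 : ℝ) s := fun s =>
    (hasDerivAt_id s).const_sub T
  have hφd : ∀ s ∈ Icc (0:ℝ) T, HasDerivAt φ (d s) s := by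
    intro s hs
    have h1 := ((hv (T - s) (mem s hs)).comp s (hinner s)).sub
      ((hu (T - s) (mem s hs)).comp s (hinner s))
    refine h1.congr_deriv ?_
    simp only [hddef]; ring
  have hbd : ∀ s ∈ Icc (0:ℝ) T, -((L + C) * |φ s|) ≤ d s := by
    intro s hs
    have ht := mem s hs
    have h1 := hLip (T - s) ht
    have h2 := hCb (T - s) ht
    have h3 := hc (T - s) ht
    have h4 := hvpos (T - s) ht
    have habs1 : -(L * |φ s|) ≤ g (v (T - s)) - g (u (T - s)) := by
      have := neg_abs_le (g (v (T - s)) - g (u (T - s)))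
      simp only [hφdef]; linarith
    have habs2 : -(C * |φ s|) ≤ cu (T - s) * φ s := by
      have h5 : |cu (T - s) * φ s| ≤ C * |φ s| := by
        rw [abs_mul]
        exact mul_le_mul_of_nonneg_right h2 (abs_nonneg _)
      linarith [neg_abs_le (cu (T - s) * φ s)]
    have h6 : cu (T - s) * φ s + (g (v (T - s)) - g (u (T - s))) ≤ d s := by
      simp only [hddef, hφdef]
      have h7 : cu (T - s) * v (T - s) ≤ cv (T - s) * v (T - s) :=
        mul_le_mul_of_nonneg_right h3 h4
      nlinarith
    nlinarith
  have h0 : φ 0 = 0 := by simp [hφdef, hend]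
  have := aux_nonneg hφd hbd h0
  intro t ht
  have h8 := this (T - t) (mem t ht)
  have h9 : T - (T - t) = t := by ring
  simp only [hφdef, h9] at h8
  linarith

/-- Monotonicity of the value-function factor `Y` in an ambiguity-aversion parameter,
high risk aversion case.  For `γ > 1`, if for each `η ≥ 0` the function `Y η` solves
`−Y′(t) = g(Y(t)) + (A(t) + ((1−γ)/(2γ)) ∑ⱼ (θⱼ⁺)²/(γ + ηⱼ)) Y(t)` with `Y(T) = β^{1/γ}`
and `Y > 0`, where only the `i`-th parameter `ηᵢ = η` varies, and `Y` depends
differentiably on `η`, then `∂Y(t)/∂η ≥ 0`: `Y` is nondecreasing in `ηᵢ`. -/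
theorem stmt13 (n : ℕ) (T γ β : ℝ) (hT : 0 < T) (hγ : 1 < γ) (hβ : 0 < β)
    (A : ℝ → ℝ) (hA : Continuous A) (g : ℝ → ℝ) (hg : ContDiff ℝ 1 g)
    (θ : Fin n → ℝ) (ηv : Fin n → ℝ) (hηv : ∀ j, 0 ≤ ηv j) (i : Fin n)
    (Y : ℝ → ℝ → ℝ)
    (hODE : ∀ η : ℝ, 0 ≤ η → ∀ t ∈ Set.Icc (0:ℝ) T,
      HasDerivAt (Y η)
        (-(g (Y η t) +
          (A t + ((1 - γ) / (2 * γ)) *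
            ∑ j, (max (θ j) 0) ^ 2 / (γ + Function.update ηv i η j)) * Y η t)) t)
    (hterm : ∀ η : ℝ, 0 ≤ η → Y η T = β ^ (1/γ : ℝ))
    (hpos : ∀ η : ℝ, 0 ≤ η → ∀ t ∈ Set.Icc (0:ℝ) T, 0 < Y η t)
    (hsmooth : ∀ t ∈ Set.Icc (0:ℝ) T, ∀ η : ℝ, 0 ≤ η →
      DifferentiableAt ℝ (fun e => Y e t) η) :
    ∀ η : ℝ, 0 ≤ η → ∀ t ∈ Set.Icc (0:ℝ) T,
      0 ≤ deriv (fun e => Y e t) η := by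
  have hγ0 : (0:ℝ) < γ := by linarith
  -- the coefficient functions
  set c : ℝ → ℝ → ℝ := fun η t => A t + ((1 - γ) / (2 * γ)) *
      ∑ j, (max (θ j) 0) ^ 2 / (γ + Function.update ηv i η j) with hcdef
  -- monotonicity in η
  have mono : ∀ η₁ η₂ : ℝ, 0 ≤ η₁ → η₁ ≤ η₂ → ∀ t ∈ Set.Icc (0:ℝ) T,
      Y η₁ t ≤ Y η₂ t := by
    intro η₁ η₂ hη₁ h12
    have hη₂ : 0 ≤ η₂ := le_trans hη₁ h12
    -- coefficient comparison
    have hc : ∀ t ∈ Set.Icc (0:ℝ) T, c η₁ t ≤ c η₂ t := by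
      intro t _
      have hsum : (∑ j, (max (θ j) 0) ^ 2 / (γ + Function.update ηv i η₂ j)) ≤
          ∑ j, (max (θ j) 0) ^ 2 / (γ + Function.update ηv i η₁ j) := by
        apply Finset.sum_le_sum
        intro j _
        by_cases hj : j = i
        · subst hj
          simp only [Function.update_self]
          exact div_le_div_of_nonneg_left (by positivity) (by linarith) (by linarith)
        · simp [Function.update_of_ne hj]
      have hk : (1 - γ) / (2 * γ) ≤ 0 := by
        apply div_nonpos_of_nonpos_of_nonneg <;> linarith
      simp only [hcdef]
      have := mul_le_mul_of_nonpos_left hsum hk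
      linarith
    -- continuity and bounds
    have hucont : ContinuousOn (Y η₁) (Set.Icc 0 T) := fun t ht =>
      (hODE η₁ hη₁ t ht).continuousAt.continuousWithinAt
    have hvcont : ContinuousOn (Y η₂) (Set.Icc 0 T) := fun t ht =>
      (hODE η₂ hη₂ t ht).continuousAt.continuousWithinAt
    obtain ⟨Ru, hRu⟩ := isCompact_Icc.exists_bound_of_continuousOn hucont
    obtain ⟨Rv, hRv⟩ := isCompact_Icc.exists_bound_of_continuousOn hvcont
    set R := max Ru Rv with hRdef
    have hmem : ∀ t ∈ Set.Icc (0:ℝ) T, Y η₁ t ∈ Set.Icc (-R) R ∧ Y η₂ t ∈ Set.Icc (-R) R := by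
      intro t ht
      have h1 := hRu t ht; have h2 := hRv t ht
      rw [Real.norm_eq_abs, abs_le] at h1 h2
      have hu1 : Ru ≤ R := le_max_left _ _
      have hv1 : Rv ≤ R := le_max_right _ _
      exact ⟨⟨by linarith [h1.1], by linarith [h1.2]⟩,
        ⟨by linarith [h2.1], by linarith [h2.2]⟩⟩
    -- Lipschitz constant for g on the relevant range
    have hderiv_cont : ContinuousOn (deriv g) (Set.Icc (-R) R) :=
      (hg.continuous_deriv le_rfl).continuousOn
    obtain ⟨L0, hL0⟩ := isCompact_Icc.exists_bound_of_continuousOn hderiv_cont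
    have hlip : LipschitzOnWith (Real.toNNReal L0) g (Set.Icc (-R) R) :=
      Convex.lipschitzOnWith_of_nnnorm_deriv_le
        (fun x _ => (hg.differentiable one_ne_zero).differentiableAt)
        (fun x hx => by
          rw [← norm_toNNReal]
          exact Real.toNNReal_le_toNNReal (hL0 x hx)) (convex_Icc _ _)
    have hLip : ∀ t ∈ Set.Icc (0:ℝ) T,
        |g (Y η₂ t) - g (Y η₁ t)| ≤ (Real.toNNReal L0 : ℝ) * |Y η₂ t - Y η₁ t| := by
      intro t ht
      have := hlip.dist_le_mul _ (hmem t ht).2 _ (hmem t ht).1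
      simpa [Real.dist_eq] using this
    -- bound on the coefficient
    have hccont : ContinuousOn (c η₁) (Set.Icc (0:ℝ) T) := by
      simp only [hcdef]
      exact (hA.add continuous_const).continuousOn
    obtain ⟨C0, hC0⟩ := isCompact_Icc.exists_bound_of_continuousOn hccont
    exact comp_le (hODE η₁ hη₁) (hODE η₂ hη₂) hc (fun t ht => (hpos η₂ hη₂ t ht).le)
      hLip (fun t ht => by simpa [Real.norm_eq_abs] using hC0 t ht)
      (by rw [hterm η₁ hη₁, hterm η₂ hη₂]) hT.le
  -- conclude derivative nonneg
  intro η hη t ht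
  have hdiff := hsmooth t ht η hη
  have hF : HasDerivAt (fun e => Y e t) (deriv (fun e => Y e t) η) η := hdiff.hasDerivAt
  have hslope := hasDerivAt_iff_tendsto_slope.mp hF
  have h2 := hslope.mono_left (nhdsWithin_mono η (fun z (hz : z ∈ Ioi η) => ne_of_gt hz))
  refine ge_of_tendsto h2 ?_
  filter_upwards [self_mem_nhdsWithin] with z hz
  have hz' : η < z := hz
  have hmono := mono η z hη (le_of_lt hz') t ht
  rw [slope_def_field]
  exact div_nonneg (by linarith) (by linarith)
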